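/- For every function u : ℝ → ℂ which is locally absolutely continuous with u ∈ L²(ℝ) and u' ∈ L²(ℝ), one has the energy lower bound (1/2)∫_ℝ |u'(x)|² dx − (1/6)∫_ℝ |u(x)|^6 dx ≥ (1/2)(∫_ℝ |u'(x)|² dx)·(1 − (4/(3π²))·(∫_ℝ |u(x)|² dx)²). -/

import Mathlib

open Real MeasureTheory intervalIntegral

lemma quarter_circle : ∫ x in (0:ℝ)..1, Real.sqrt (1 - x^2) = π / 4 := by
  have hc : Continuous fun x : ℝ => Real.sqrt (1 - x^2) := by
    exact (continuous_const.sub (continuous_pow 2)).sqrt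
  have h1 : (∫ x in (-1:ℝ)..0, Real.sqrt (1 - x^2)) + ∫ x in (0:ℝ)..1, Real.sqrt (1 - x^2)
      = π / 2 := by
    rw [intervalIntegral.integral_add_adjacent_intervals (hc.intervalIntegrable _ _)
      (hc.intervalIntegrable _ _)]
    exact integral_sqrt_one_sub_sq
  have h2 : (∫ x in (-1:ℝ)..0, Real.sqrt (1 - x^2)) = ∫ x in (0:ℝ)..1, Real.sqrt (1 - x^2) := by
    have := intervalIntegral.integral_comp_neg (a := (0:ℝ)) (b := 1)
      (fun x : ℝ => Real.sqrt (1 - x^2))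
    simp only [neg_zero] at this
    rw [← this]
    congr 1
    ext x
    ring_nf
  linarith

lemma halfdisk (R : ℝ) (hR : 0 < R) :
    ∫ v in (0:ℝ)..R, Real.sqrt (R^2 - v^2) = π * R^2 / 4 := by
  have hf : Continuous fun v : ℝ => Real.sqrt (R^2 - v^2) :=
    (continuous_const.sub (continuous_pow 2)).sqrt
  have h := intervalIntegral.integral_comp_smul_deriv (a := (0:ℝ)) (b := 1)
    (f := fun x => R * x) (f' := fun _ => R) (g := fun v => Real.sqrt (R^2 - v^2))
    (fun x _ => by simpa using (hasDerivAt_id x).const_mul R) continuousOn_const hf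
  simp only [mul_zero, mul_one, Function.comp] at h
  rw [← h]
  have : ∀ x ∈ Set.uIcc (0:ℝ) 1, R • Real.sqrt (R^2 - (R*x)^2) = R^2 * Real.sqrt (1 - x^2) := by
    intro x _
    have : R^2 - (R*x)^2 = R^2 * (1 - x^2) := by ring
    rw [smul_eq_mul, this, Real.sqrt_mul (sq_nonneg R), Real.sqrt_sq hR.le]
    ring
  rw [intervalIntegral.integral_congr this, intervalIntegral.integral_const_mul, quarter_circle]
  ring

lemma key_integral (A : ℝ) (hA : 0 < A) :
    ∫ t in (0:ℝ)..A, t * Real.sqrt (A^4 - t^4) = π * A^4 / 8 := by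
  have hf : Continuous fun v : ℝ => Real.sqrt (A^4 - v^2) :=
    (continuous_const.sub (continuous_pow 2)).sqrt
  have h := intervalIntegral.integral_comp_smul_deriv (a := (0:ℝ)) (b := A)
    (f := fun x => x^2) (f' := fun x => 2*x) (g := fun v => Real.sqrt (A^4 - v^2))
    (fun x _ => by simpa using (hasDerivAt_pow 2 x)) (by fun_prop) hf
  simp only [Function.comp] at h
  have h2 : ∀ x ∈ Set.uIcc (0:ℝ) A, (2*x) • Real.sqrt (A^4 - (x^2)^2)
      = 2 * (x * Real.sqrt (A^4 - x^4)) := by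
    intro x _
    rw [smul_eq_mul]
    ring_nf
  rw [intervalIntegral.integral_congr h2, intervalIntegral.integral_const_mul] at h
  have h4 : (∫ v in ((0:ℝ))..(A^2), Real.sqrt (A^4 - v^2)) = π * A^4 / 4 := by
    have := halfdisk (A^2) (by positivity)
    have e : ((A^2)^2 : ℝ) = A^4 := by ring
    rw [e] at this
    rw [this]
  have e0 : ((0:ℝ)^2) = 0 := by norm_num
  rw [e0, h4] at h
  linarith

lemma chain_bound (f g φ : ℝ → ℝ) (Cφ : ℝ)
    (hfc : Continuous f)
    (hφc : Continuous φ) (hφ0 : ∀ t, 0 ≤ φ t) (hφb : ∀ t, φ t ≤ Cφ)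
    (hφuc : ∀ ε > 0, ∃ δ > 0, ∀ s t : ℝ, |s - t| < δ → |φ s - φ t| ≤ ε)
    (hg : ∀ a b : ℝ, IntervalIntegrable g volume a b) (hg0 : ∀ t, 0 ≤ g t)
    (hf : ∀ a b : ℝ, a ≤ b → |f b - f a| ≤ ∫ t in a..b, g t)
    (hmod : ∀ ε > 0, ∃ δ > 0, ∀ a b : ℝ, a ≤ b → b - a ≤ δ → (∫ t in a..b, g t) ≤ ε)
    (a b : ℝ) (hab : a ≤ b) :
    |(∫ s in (0:ℝ)..(f b), φ s) - ∫ s in (0:ℝ)..(f a), φ s|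
      ≤ ∫ t in a..b, φ (f t) * g t := by
  -- integrability of products
  have hker : ∀ (c : ℝ), 0 ≤ c → ∀ x y : ℝ,
      IntervalIntegrable (fun t => (φ (f t) + c) * g t) volume x y := by
    intro c hc x y
    obtain ⟨h1, h2⟩ := hg x y
    have hm : AEStronglyMeasurable (fun t => φ (f t) + c) (volume : Measure ℝ) :=
      ((hφc.comp hfc).add continuous_const).aestronglyMeasurable
    have hb : ∀ t : ℝ, ‖φ (f t) + c‖ ≤ Cφ + c := fun t => by
      rw [Real.norm_eq_abs, abs_of_nonneg (by linarith [hφ0 (f t)])]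
      linarith [hφb (f t)]
    exact ⟨h1.bdd_mul hm.restrict (Filter.Eventually.of_forall hb), h2.bdd_mul hm.restrict (Filter.Eventually.of_forall hb)⟩
  have hker0 : ∀ x y : ℝ, IntervalIntegrable (fun t => φ (f t) * g t) volume x y := by
    intro x y
    have := hker 0 le_rfl x y
    simpa using this
  set Φ : ℝ → ℝ := fun s => ∫ v in (0:ℝ)..s, φ v with hΦdef
  have hΦsub : ∀ α β : ℝ, Φ β - Φ α = ∫ v in α..β, φ v := by
    intro α β
    exact integral_interval_sub_left (hφc.intervalIntegrable _ _) (hφc.intervalIntegrable _ _)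
  have hCab : (0:ℝ) ≤ ∫ t in a..b, g t :=
    intervalIntegral.integral_nonneg hab fun t _ => hg0 t
  refine le_of_forall_pos_le_add ?_
  intro ε hε
  set Cab := ∫ t in a..b, g t with hCabdef
  set ε₁ : ℝ := ε / (2 * (Cab + 1)) with hε₁def
  have hε₁ : 0 < ε₁ := by positivity
  obtain ⟨δ, hδ, huc⟩ := hφuc ε₁ hε₁
  obtain ⟨δ₂, hδ₂, hsmall⟩ := hmod (δ/2) (by positivity)
  set n : ℕ := max 1 ⌈(b - a)/δ₂⌉₊ with hndef
  have hn1 : 1 ≤ n := le_max_left _ _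
  have hnpos : (0:ℝ) < n := by exact_mod_cast Nat.lt_of_lt_of_le Nat.zero_lt_one hn1
  set h : ℝ := (b - a)/n with hhdef
  have hh0 : 0 ≤ h := by
    apply div_nonneg (by linarith) hnpos.le
  have hhδ₂ : h ≤ δ₂ := by
    rw [hhdef, div_le_iff₀ hnpos]
    calc b - a ≤ δ₂ * ((b-a)/δ₂) := by rw [mul_div_cancel₀]; exact hδ₂.ne'
    _ ≤ δ₂ * n := by
        apply mul_le_mul_of_nonneg_left _ hδ₂.le
        exact le_trans (Nat.le_ceil _) (by exact_mod_cast le_max_right 1 _)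
  set t : ℕ → ℝ := fun i => a + i * h with htdef
  have ht0 : t 0 = a := by simp [htdef]
  have htn : t n = b := by
    simp only [htdef, hhdef]
    field_simp
    ring
  have htstep : ∀ i : ℕ, t (i+1) - t i = h := by
    intro i; simp [htdef]; ring
  have htmono : ∀ i : ℕ, t i ≤ t (i+1) := by
    intro i; have := htstep i; linarith
  -- oscillation bound on each piece
  have hosc : ∀ i r, t i ≤ r → r ≤ t (i+1) → |f r - f (t i)| < δ := by
    intro i r h1 h2
    have e1 : |f r - f (t i)| ≤ ∫ s in (t i)..r, g s := hf _ _ h1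
    have e2 : (∫ s in (t i)..r, g s) ≤ ∫ s in (t i)..(t (i+1)), g s := by
      rw [← integral_add_adjacent_intervals (hg (t i) r) (hg r (t (i+1)))]
      have : (0:ℝ) ≤ ∫ s in r..(t (i+1)), g s :=
        intervalIntegral.integral_nonneg h2 fun s _ => hg0 s
      linarith
    have e3 : (∫ s in (t i)..(t (i+1)), g s) ≤ δ/2 := by
      apply hsmall _ _ (htmono i)
      rw [htstep i]; exact hhδ₂
    linarith
  have hpiece : ∀ i, i < n → |Φ (f (t (i+1))) - Φ (f (t i))|
      ≤ ∫ s in (t i)..(t (i+1)), (φ (f s) + 2*ε₁) * g s := by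
    intro i _
    have hmono := htmono i
    have hintg : (0:ℝ) ≤ ∫ s in (t i)..(t (i+1)), g s :=
      intervalIntegral.integral_nonneg hmono fun s _ => hg0 s
    have hfd : |f (t (i+1)) - f (t i)| ≤ ∫ s in (t i)..(t (i+1)), g s := hf _ _ hmono
    have hpos : 0 ≤ φ (f (t i)) + ε₁ := by linarith [hφ0 (f (t i))]
    have h1 : |Φ (f (t (i+1))) - Φ (f (t i))|
        ≤ (φ (f (t i)) + ε₁) * |f (t (i+1)) - f (t i)| := by
      rw [hΦsub]
      have hb : ∀ x ∈ Set.uIoc (f (t i)) (f (t (i+1))), ‖φ x‖ ≤ φ (f (t i)) + ε₁ := by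
        intro x hx
        have hx' : |x - f (t i)| ≤ |f (t (i+1)) - f (t i)| :=
          Set.abs_sub_left_of_mem_uIcc (Set.uIoc_subset_uIcc hx)
        have : |x - f (t i)| < δ := lt_of_le_of_lt hx' (hosc i _ hmono le_rfl)
        have := huc x (f (t i)) this
        rw [Real.norm_eq_abs, abs_of_nonneg (hφ0 x)]
        have := abs_le.mp this
        linarith [this.1, this.2]
      have := intervalIntegral.norm_integral_le_of_norm_le_const hb
      rw [Real.norm_eq_abs] at this
      exact this
    have h2 : (φ (f (t i)) + ε₁) * |f (t (i+1)) - f (t i)|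
        ≤ (φ (f (t i)) + ε₁) * ∫ s in (t i)..(t (i+1)), g s :=
      mul_le_mul_of_nonneg_left hfd hpos
    have h3 : (φ (f (t i)) + ε₁) * (∫ s in (t i)..(t (i+1)), g s)
        = ∫ s in (t i)..(t (i+1)), (φ (f (t i)) + ε₁) * g s :=
      (intervalIntegral.integral_const_mul _ _).symm
    have h4 : (∫ s in (t i)..(t (i+1)), (φ (f (t i)) + ε₁) * g s)
        ≤ ∫ s in (t i)..(t (i+1)), (φ (f s) + 2*ε₁) * g s := by
      apply intervalIntegral.integral_mono_on hmono ((hg _ _).const_mul _)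
        (hker (2*ε₁) (by linarith) _ _)
      intro s hs
      have hless : |f s - f (t i)| < δ := hosc i s hs.1 hs.2
      have := abs_le.mp (huc (f (t i)) (f s) (by rwa [abs_sub_comm]))
      have hcoef : φ (f (t i)) + ε₁ ≤ φ (f s) + 2*ε₁ := by linarith [this.1, this.2]
      exact mul_le_mul_of_nonneg_right hcoef (hg0 s)
    linarith [h1, h2, h3 ▸ h2, h4]
  have htel : Φ (f b) - Φ (f a)
      = ∑ i ∈ Finset.range n, (Φ (f (t (i+1))) - Φ (f (t i))) := by
    rw [Finset.sum_range_sub (fun i => Φ (f (t i))), ht0, htn]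
  have hsum : |Φ (f b) - Φ (f a)|
      ≤ ∑ i ∈ Finset.range n, ∫ s in (t i)..(t (i+1)), (φ (f s) + 2*ε₁) * g s := by
    rw [htel]
    refine (Finset.abs_sum_le_sum_abs _ _).trans ?_
    exact Finset.sum_le_sum fun i hi => hpiece i (Finset.mem_range.mp hi)
  have hadj : (∑ i ∈ Finset.range n, ∫ s in (t i)..(t (i+1)), (φ (f s) + 2*ε₁) * g s)
      = ∫ s in a..b, (φ (f s) + 2*ε₁) * g s := by
    have := intervalIntegral.sum_integral_adjacent_intervals (a := t) (n := n)
      (f := fun s => (φ (f s) + 2*ε₁) * g s) (μ := volume)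
      (fun k _ => hker (2*ε₁) (by linarith) _ _)
    rw [ht0, htn] at this
    exact this
  have hsplit : (∫ s in a..b, (φ (f s) + 2*ε₁) * g s)
      = (∫ s in a..b, φ (f s) * g s) + 2*ε₁*Cab := by
    have he : ∀ s ∈ Set.uIcc a b, (φ (f s) + 2*ε₁) * g s
        = φ (f s) * g s + (2*ε₁) * g s := fun s _ => by ring
    rw [intervalIntegral.integral_congr he,
      intervalIntegral.integral_add (hker0 a b) ((hg a b).const_mul _),
      intervalIntegral.integral_const_mul]
  have hq : ε₁ * (2 * (Cab + 1)) = ε := by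
    rw [hε₁def]; field_simp
  have hfin : 2*ε₁*Cab ≤ ε := by nlinarith [hε₁, hCab]
  calc |Φ (f b) - Φ (f a)| ≤ (∫ s in a..b, φ (f s) * g s) + 2*ε₁*Cab := by
        rw [← hsplit, ← hadj]; exact hsum
    _ ≤ (∫ s in a..b, φ (f s) * g s) + ε := by linarith

set_option maxHeartbeats 4000000

/-- Energy lower bound from the sharp Gagliardo–Nirenberg inequality:
for `u` locally absolutely continuous with `u, u' ∈ L²(ℝ)`,
`E_crit(u) = (1/2)∫|u'|² − (1/6)∫|u|^6 ≥ (1/2)(∫|u'|²)(1 − (4/(3π²))(∫|u|²)²)`,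
where `(4/(3π²))(∫|u|²)² = ‖u‖_{L²}^4/‖Q‖_{L²}^4`. -/
theorem energy_lower_bound (u u' : ℝ → ℂ)
    (hAC : ∀ x : ℝ, u x = u 0 + ∫ t in (0 : ℝ)..x, u' t)
    (hu : MemLp u 2 (volume : Measure ℝ))
    (hu' : MemLp u' 2 (volume : Measure ℝ)) :
    (1 / 2) * (∫ x : ℝ, ‖u' x‖ ^ 2) - (1 / 6) * (∫ x : ℝ, ‖u x‖ ^ 6) ≥
      (1 / 2) * (∫ x : ℝ, ‖u' x‖ ^ 2) *
        (1 - (4 / (3 * Real.pi ^ 2)) * (∫ x : ℝ, ‖u x‖ ^ 2) ^ 2) := by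
  -- basic integrability
  have hsq : ∀ v : ℝ → ℂ, MemLp v 2 (volume : Measure ℝ) →
      Integrable (fun x => ‖v x‖^2) (volume : Measure ℝ) := by
    intro v hv
    have h := hv.integrable_norm_rpow (by norm_num) (by norm_num)
    simp only [ENNReal.toReal_ofNat] at h
    have e : ∀ x : ℝ, ‖v x‖ ^ (2:ℝ) = ‖v x‖^2 := fun x => by
      rw [show ((2:ℝ)) = ((2:ℕ):ℝ) by norm_num, Real.rpow_natCast]
    exact h.congr (Filter.Eventually.of_forall e)
  have hu2 : Integrable (fun x => ‖u x‖^2) (volume : Measure ℝ) := hsq u hu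
  have hK' : Integrable (fun x => ‖u' x‖^2) (volume : Measure ℝ) := hsq u' hu'
  have hloc0 : ∀ a b : ℝ, IntegrableOn u' (Set.Ioc a b) volume := by
    intro a b
    have hdom : IntegrableOn (fun x : ℝ => (1:ℝ) + ‖u' x‖^2) (Set.Ioc a b) volume :=
      (integrableOn_const measure_Ioc_lt_top.ne).add hK'.integrableOn
    refine Integrable.mono' hdom hu'.1.restrict (Filter.Eventually.of_forall fun x => ?_)
    nlinarith [sq_nonneg (‖u' x‖ - 1), norm_nonneg (u' x)]
  have hloc : ∀ a b : ℝ, IntervalIntegrable u' volume a b :=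
    fun a b => ⟨hloc0 a b, hloc0 b a⟩
  have hucont : Continuous u := by
    have h1 : Continuous fun x : ℝ => u 0 + ∫ t in (0:ℝ)..x, u' t :=
      continuous_const.add (intervalIntegral.continuous_primitive (fun a b => hloc a b) 0)
    exact h1.congr fun x => (hAC x).symm
  set f : ℝ → ℝ := fun x => ‖u x‖ with hfdef
  set g : ℝ → ℝ := fun x => ‖u' x‖ with hgdef
  have hfc : Continuous f := hucont.norm
  have hf0 : ∀ x, 0 ≤ f x := fun x => norm_nonneg _
  have hg0 : ∀ x, 0 ≤ g x := fun x => norm_nonneg _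
  have hgloc : ∀ a b : ℝ, IntervalIntegrable g volume a b := fun a b => (hloc a b).norm
  set K : ℝ := ∫ x : ℝ, ‖u' x‖ ^ 2 with hKdef
  set m : ℝ := ∫ x : ℝ, ‖u x‖ ^ 2 with hmdef
  set S : ℝ := ∫ x : ℝ, ‖u x‖ ^ 6 with hSdef
  have hK0 : 0 ≤ K := integral_nonneg fun x => sq_nonneg _
  have hm0 : 0 ≤ m := integral_nonneg fun x => sq_nonneg _
  have hS0 : 0 ≤ S := integral_nonneg fun x => by positivity
  -- increments controlled by ∫ g
  have hdiff : ∀ a b : ℝ, a ≤ b → |f b - f a| ≤ ∫ t in a..b, g t := by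
    intro a b hab
    have h1 : u b - u a = ∫ t in a..b, u' t := by
      rw [hAC b, hAC a]
      have := intervalIntegral.integral_interval_sub_left (hloc 0 b) (hloc 0 a)
      rw [← this]; ring
    calc |f b - f a| ≤ ‖u b - u a‖ := abs_norm_sub_norm_le _ _
      _ = ‖∫ t in a..b, u' t‖ := by rw [h1]
      _ ≤ ∫ t in a..b, ‖u' t‖ := intervalIntegral.norm_integral_le_integral_norm hab
  -- Cauchy–Schwarz-type bound
  have hCS : ∀ a b : ℝ, a ≤ b → ∀ ε : ℝ, 0 < ε →
      (∫ t in a..b, g t) ≤ ε/2*(b-a) + K/(2*ε) := by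
    intro a b hab ε hε
    have h1 : (∫ t in a..b, g t) ≤ ∫ t in a..b, (ε/2 + g t^2/(2*ε)) := by
      apply intervalIntegral.integral_mono_on hab (hgloc a b)
        (intervalIntegrable_const.add ((hK'.intervalIntegrable).div_const _))
      intro x _
      have h2 := sq_nonneg (g x - ε)
      have h4 : g x ^2/(2*ε) * (2*ε) = g x^2 := by field_simp
      nlinarith [h2, h4, hε]
    have h2 : (∫ t in a..b, (ε/2 + g t^2/(2*ε)))
        = (b-a)•(ε/2) + (∫ t in a..b, g t^2)/(2*ε) := by
      rw [intervalIntegral.integral_add intervalIntegrable_const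
        ((hK'.intervalIntegrable).div_const _), intervalIntegral.integral_const,
        intervalIntegral.integral_div]
    have h3 : (∫ t in a..b, g t^2) ≤ K := by
      rw [intervalIntegral.integral_of_le hab]
      exact setIntegral_le_integral hK' (Filter.Eventually.of_forall fun x => sq_nonneg _)
    have h4 : (∫ t in a..b, g t^2)/(2*ε) ≤ K/(2*ε) := by
      gcongr
    rw [h2] at h1
    have : (b-a)•(ε/2) = ε/2*(b-a) := by rw [smul_eq_mul]; ring
    linarith [h1, h4, this ▸ h1]
  have hmod : ∀ ε : ℝ, 0 < ε → ∃ δ : ℝ, 0 < δ ∧ ∀ a b : ℝ, a ≤ b → b - a ≤ δ →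
      (∫ t in a..b, g t) ≤ ε := by
    intro ε hε
    refine ⟨ε^2/(K+1), by positivity, fun a b hab hlen => ?_⟩
    have h0 := hCS a b hab ((K+1)/ε) (by positivity)
    have h1 : (K+1)/ε/2*(b-a) ≤ (K+1)/ε/2 * (ε^2/(K+1)) :=
      mul_le_mul_of_nonneg_left hlen (by positivity)
    have h2 : (K+1)/ε/2*(ε^2/(K+1)) = ε/2 := by field_simp
    have h3 : K/(2*((K+1)/ε)) = K*ε/(2*(K+1)) := by
      rw [div_eq_div_iff (by positivity) (by positivity)]
      field_simp
    have h4 : K*ε/(2*(K+1)) ≤ ε/2 := by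
      rw [div_le_div_iff₀ (by positivity) (by norm_num)]
      nlinarith
    linarith
  -- on every interval of length T there is a point where f is small
  have hminT : ∀ x T : ℝ, 0 < T → ∃ y ∈ Set.Icc (x-T) x, (f y)^2 * T ≤ m := by
    intro x T hT
    by_contra hcon
    push_neg at hcon
    have hne : (Set.Icc (x-T) x).Nonempty := by
      rw [Set.nonempty_Icc]; linarith
    obtain ⟨y₀, hy₀mem, hy₀min⟩ := isCompact_Icc.exists_isMinOn hne hfc.continuousOn
    have hlt : m < f y₀^2 * T := hcon y₀ hy₀mem
    have hint1 : (∫ y in Set.Icc (x-T) x, f y^2) ≤ m :=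
      setIntegral_le_integral hu2 (Filter.Eventually.of_forall fun y => sq_nonneg _)
    have hint2 : f y₀^2 * T ≤ ∫ y in Set.Icc (x-T) x, f y^2 := by
      have hconst : (∫ _y in Set.Icc (x-T) x, f y₀^2) = f y₀^2 * T := by
        rw [setIntegral_const, Real.volume_real_Icc, smul_eq_mul]
        have : x - (x - T) = T := by ring
        rw [this, max_eq_left hT.le]
        ring
      rw [← hconst]
      apply setIntegral_mono_on (integrableOn_const ?_)
        hu2.integrableOn measurableSet_Icc
      · intro y hy
        exact pow_le_pow_left₀ (hf0 y₀) (hy₀min hy) 2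
      · rw [Real.volume_Icc]
        exact ENNReal.ofReal_ne_top
    linarith
  have hbound : ∀ x : ℝ, f x ≤ Real.sqrt m + (1/2 + K/2) := by
    intro x
    obtain ⟨y, hymem, hy⟩ := hminT x 1 one_pos
    have hyx : y ≤ x := hymem.2
    have h1 : f x - f y ≤ ∫ t in y..x, g t :=
      (le_abs_self _).trans (hdiff y x hyx)
    have h2 : (∫ t in y..x, g t) ≤ 1/2*(x-y) + K/(2*1) := hCS y x hyx 1 one_pos
    have h3 : x - y ≤ 1 := by linarith [hymem.1]
    have h4 : f y ≤ Real.sqrt m := by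
      have hfy : f y^2 ≤ m := by nlinarith [hy]
      calc f y = Real.sqrt (f y^2) := (Real.sqrt_sq (hf0 y)).symm
        _ ≤ Real.sqrt m := Real.sqrt_le_sqrt hfy
    nlinarith [h1, h2, h3, h4]
  set A : ℝ := ⨆ x, f x with hAdef
  have hbdd : BddAbove (Set.range f) :=
    ⟨Real.sqrt m + (1/2 + K/2), by rintro _ ⟨x, rfl⟩; exact hbound x⟩
  have hfA : ∀ x, f x ≤ A := fun x => le_ciSup hbdd x
  have hA0 : 0 ≤ A := le_trans (hf0 0) (hfA 0)
  have hdecay : ∀ ε : ℝ, 0 < ε → ∀ Y : ℝ,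
      (∃ y, y ≤ Y ∧ f y < ε) ∧ (∃ y, Y ≤ y ∧ f y < ε) := by
    intro ε hε Y
    have hT : 0 < m/ε^2 + 1 := by positivity
    have key : ∀ x : ℝ, ∀ y ∈ Set.Icc (x - (m/ε^2+1)) x, f y ^2 * (m/ε^2+1) ≤ m → f y < ε := by
      intro x y _ hy
      by_contra hcon
      push_neg at hcon
      have h0 : ε^2 ≤ f y^2 := by nlinarith [hε.le, hf0 y]
      have h1 : ε^2 * (m/ε^2+1) ≤ f y^2 * (m/ε^2+1) :=
        mul_le_mul_of_nonneg_right h0 hT.le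
      have h2 : ε^2*(m/ε^2+1) = m + ε^2 := by field_simp
      nlinarith [hε, sq_nonneg ε]
    constructor
    · obtain ⟨y, hymem, hy⟩ := hminT Y (m/ε^2+1) hT
      exact ⟨y, hymem.2, key Y y hymem hy⟩
    · obtain ⟨y, hymem, hy⟩ := hminT (Y + (m/ε^2+1)) (m/ε^2+1) hT
      refine ⟨y, ?_, key _ y hymem hy⟩
      have := hymem.1
      linarith
  have hS' : Integrable (fun x => ‖u x‖^6) (volume : Measure ℝ) := by
    refine Integrable.mono' (hu2.const_mul (A^4)) (hucont.norm.pow 6).aestronglyMeasurable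
      (Filter.Eventually.of_forall fun x => ?_)
    rw [Real.norm_eq_abs, abs_of_nonneg (by positivity)]
    have h4 : ‖u x‖^4 ≤ A^4 := pow_le_pow_left₀ (norm_nonneg _) (hfA x) 4
    calc ‖u x‖^6 = ‖u x‖^4 * ‖u x‖^2 := by ring
      _ ≤ A^4 * ‖u x‖^2 := mul_le_mul_of_nonneg_right h4 (sq_nonneg _)
  -- the master inequality
  have hmaster : 0 < A → ∀ η : ℝ, 0 < η → ∀ κ : ℝ, 0 < κ →
      π/2 * κ * A^4 ≤ K + κ^2 * ((A+η)^4 * m - S) := by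
    intro hApos η hη κ hκ
    set M : ℝ := A + η with hMdef
    have hAM : A < M := by rw [hMdef]; linarith
    have hM0 : 0 < M := lt_of_le_of_lt hA0 hAM
    set cl : ℝ → ℝ := fun v => min (max v 0) A with hcldef
    have hcl0 : ∀ v, 0 ≤ cl v := fun v => le_min (le_max_right v 0) hA0
    have hclA : ∀ v, cl v ≤ A := fun v => min_le_right _ _
    have hclf : ∀ x, cl (f x) = f x := fun x => by
      rw [hcldef]
      simp only
      rw [max_eq_left (hf0 x), min_eq_left (hfA x)]
    have hclLip : ∀ s t : ℝ, |cl s - cl t| ≤ |s - t| := by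
      intro s t
      refine (abs_min_sub_min_le_max _ _ _ _).trans ?_
      rw [sub_self, abs_zero]
      exact max_le (abs_max_sub_max_le_abs _ _ _) (abs_nonneg _)
    have hclc : Continuous cl := (continuous_id.max continuous_const).min continuous_const
    set φ : ℝ → ℝ := fun v => cl v * Real.sqrt (M^4 - (cl v)^4) with hφdef
    have hφc : Continuous φ := hclc.mul (continuous_const.sub (hclc.pow 4)).sqrt
    have hφ0 : ∀ v, 0 ≤ φ v := fun v => mul_nonneg (hcl0 v) (Real.sqrt_nonneg _)
    have hφb : ∀ v, φ v ≤ A * M^2 := by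
      intro v
      have h1 : Real.sqrt (M^4 - cl v^4) ≤ M^2 := by
        have h2 : M^4 - cl v^4 ≤ (M^2)^2 := by nlinarith [pow_nonneg (hcl0 v) 4]
        exact (Real.sqrt_le_sqrt h2).trans (le_of_eq (Real.sqrt_sq (by positivity)))
      exact mul_le_mul (hclA v) h1 (Real.sqrt_nonneg _) hA0
    have hφbn : ∀ v, ‖φ v‖ ≤ A * M^2 := fun v => by
      rw [Real.norm_eq_abs, abs_of_nonneg (hφ0 _)]; exact hφb _
    have hφuc : ∀ ε : ℝ, 0 < ε → ∃ δ, 0 < δ ∧ ∀ s t : ℝ, |s - t| < δ → |φ s - φ t| ≤ ε := by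
      intro ε hε
      have hqc : Continuous (fun v : ℝ => v * Real.sqrt (M^4 - v^4)) :=
        continuous_id.mul (continuous_const.sub (continuous_pow 4)).sqrt
      have huc := (isCompact_Icc (a := (0:ℝ)) (b := A)).uniformContinuousOn_of_continuous
        hqc.continuousOn
      rw [Metric.uniformContinuousOn_iff] at huc
      obtain ⟨δ, hδ, hd⟩ := huc ε hε
      refine ⟨δ, hδ, fun s t hst => ?_⟩
      have h3 : dist (cl s) (cl t) < δ := by
        rw [Real.dist_eq]; exact lt_of_le_of_lt (hclLip s t) hst
      have := hd _ ⟨hcl0 s, hclA s⟩ _ ⟨hcl0 t, hclA t⟩ h3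
      rw [Real.dist_eq] at this
      exact this.le
    have hchain := chain_bound f g φ (A*M^2) hfc hφc hφ0 hφb hφuc hgloc hg0 hdiff hmod
    set Φ : ℝ → ℝ := fun s => ∫ v in (0:ℝ)..s, φ v with hΦdef
    have hφfg : ∀ x y : ℝ, IntervalIntegrable (fun t => φ (f t) * g t) volume x y := by
      intro x y
      obtain ⟨h1, h2⟩ := hgloc x y
      have hm' : AEStronglyMeasurable (fun t => φ (f t)) (volume : Measure ℝ) :=
        (hφc.comp hfc).aestronglyMeasurable
      exact ⟨h1.bdd_mul hm'.restrict (Filter.Eventually.of_forall fun t => hφbn (f t)),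
        h2.bdd_mul hm'.restrict (Filter.Eventually.of_forall fun t => hφbn (f t))⟩
    have hφf2eq : ∀ x : ℝ, (φ (f x))^2 = M^4 * f x^2 - f x^6 := by
      intro x
      have h1 : φ (f x) = f x * Real.sqrt (M^4 - f x^4) := by
        rw [hφdef]; simp only; rw [hclf x]
      have h2 : 0 ≤ M^4 - f x^4 := by
        have := pow_le_pow_left₀ (hf0 x) ((hfA x).trans hAM.le) 4
        linarith
      rw [h1, mul_pow, Real.sq_sqrt h2]
      ring
    have hφf2int : Integrable (fun x => (φ (f x))^2) (volume : Measure ℝ) := by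
      refine ((hu2.const_mul (M^4)).sub hS').congr (Filter.Eventually.of_forall fun x => ?_)
      exact (hφf2eq x).symm
    set G : ℝ → ℝ := fun x => g x^2 + κ^2 * (φ (f x))^2 with hGdef
    have hG : Integrable G (volume : Measure ℝ) := by
      refine Integrable.add ?_ (hφf2int.const_mul _)
      exact hK'
    have hG0 : ∀ x, 0 ≤ G x := fun x => by
      have := sq_nonneg (g x); have := sq_nonneg (φ (f x)); positivity
    -- pointwise AM-GM under an interval integral
    have hAM2 : ∀ y x₀ : ℝ, y ≤ x₀ →
        (∫ t in y..x₀, κ * (φ (f t) * g t)) ≤ ∫ t in y..x₀, (1/2) * G t := by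
      intro y x₀ hyx
      apply intervalIntegral.integral_mono_on hyx ((hφfg y x₀).const_mul κ)
        ((hG.const_mul (1/2)).intervalIntegrable)
      intro t _
      rw [hGdef]
      simp only
      nlinarith [sq_nonneg (g t - κ * φ (f t))]
    -- bounds on Φ
    have hΦabs : ∀ s : ℝ, |Φ s| ≤ (A*M^2) * |s| := by
      intro s
      have := intervalIntegral.norm_integral_le_of_norm_le_const
        (a := (0:ℝ)) (b := s) (C := A*M^2) (f := φ) (fun v _ => hφbn v)
      rw [Real.norm_eq_abs, sub_zero] at this
      exact this
    -- half-line bounds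
    have hIic : ∀ x₀ : ℝ, κ * Φ (f x₀) ≤ (1/2) * ∫ x in Set.Iic x₀, G x := by
      intro x₀
      refine le_of_forall_pos_le_add ?_
      intro ε hε
      set c : ℝ := κ*(A*M^2) with hcdef
      have hc0 : 0 ≤ c := by positivity
      obtain ⟨⟨y, hyY, hyε⟩, -⟩ := hdecay (ε/(c+1)) (by positivity) x₀
      have h2 : Φ (f x₀) ≤ Φ (f y) + ∫ t in y..x₀, φ (f t) * g t := by
        have h := hchain y x₀ hyY
        have := (abs_le.mp h).2
        linarith [this]
      have h2' : κ * Φ (f x₀) ≤ κ * Φ (f y) + κ * ∫ t in y..x₀, φ (f t) * g t := by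
        have := mul_le_mul_of_nonneg_left h2 hκ.le
        rw [mul_add] at this
        exact this
      have h5 : (∫ t in y..x₀, κ * (φ (f t) * g t)) = κ * ∫ t in y..x₀, φ (f t) * g t :=
        intervalIntegral.integral_const_mul _ _
      have h3 := hAM2 y x₀ hyY
      have h4 : (∫ t in y..x₀, (1/2) * G t) ≤ (1/2) * ∫ x in Set.Iic x₀, G x := by
        rw [intervalIntegral.integral_const_mul]
        refine mul_le_mul_of_nonneg_left ?_ (by norm_num)
        rw [intervalIntegral.integral_of_le hyY]
        refine setIntegral_mono_set hG.integrableOn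
          (Filter.Eventually.of_forall fun x => hG0 x)
          (HasSubset.Subset.eventuallyLE Set.Ioc_subset_Iic_self)
      have h6 : κ * Φ (f y) ≤ ε := by
        have ha : κ * Φ (f y) ≤ c * f y := by
          have h7 : Φ (f y) ≤ (A*M^2) * f y := by
            have := hΦabs (f y)
            rw [abs_of_nonneg (hf0 y)] at this
            exact (le_abs_self _).trans this
          calc κ * Φ (f y) ≤ κ * ((A*M^2) * f y) := mul_le_mul_of_nonneg_left h7 hκ.le
            _ = c * f y := by rw [hcdef]; ring
        have hb : c * f y ≤ (c+1) * (ε/(c+1)) := by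
          apply mul_le_mul (by linarith) hyε.le (hf0 y) (by linarith)
        have hcc : (c+1) * (ε/(c+1)) = ε := by field_simp
        linarith
      linarith
    have hIoi : ∀ x₀ : ℝ, κ * Φ (f x₀) ≤ (1/2) * ∫ x in Set.Ioi x₀, G x := by
      intro x₀
      refine le_of_forall_pos_le_add ?_
      intro ε hε
      set c : ℝ := κ*(A*M^2) with hcdef
      have hc0 : 0 ≤ c := by positivity
      obtain ⟨-, ⟨y, hyY, hyε⟩⟩ := hdecay (ε/(c+1)) (by positivity) x₀
      have h2 : Φ (f x₀) ≤ Φ (f y) + ∫ t in x₀..y, φ (f t) * g t := by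
        have h := hchain x₀ y hyY
        have := (abs_le.mp h).1
        linarith [this]
      have h2' : κ * Φ (f x₀) ≤ κ * Φ (f y) + κ * ∫ t in x₀..y, φ (f t) * g t := by
        have := mul_le_mul_of_nonneg_left h2 hκ.le
        rw [mul_add] at this
        exact this
      have h5 : (∫ t in x₀..y, κ * (φ (f t) * g t)) = κ * ∫ t in x₀..y, φ (f t) * g t :=
        intervalIntegral.integral_const_mul _ _
      have h3 := hAM2 x₀ y hyY
      have h4 : (∫ t in x₀..y, (1/2) * G t) ≤ (1/2) * ∫ x in Set.Ioi x₀, G x := by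
        rw [intervalIntegral.integral_const_mul]
        refine mul_le_mul_of_nonneg_left ?_ (by norm_num)
        rw [intervalIntegral.integral_of_le hyY]
        refine setIntegral_mono_set hG.integrableOn
          (Filter.Eventually.of_forall fun x => hG0 x)
          (HasSubset.Subset.eventuallyLE Set.Ioc_subset_Ioi_self)
      have h6 : κ * Φ (f y) ≤ ε := by
        have ha : κ * Φ (f y) ≤ c * f y := by
          have h7 : Φ (f y) ≤ (A*M^2) * f y := by
            have := hΦabs (f y)
            rw [abs_of_nonneg (hf0 y)] at this
            exact (le_abs_self _).trans this
          calc κ * Φ (f y) ≤ κ * ((A*M^2) * f y) := mul_le_mul_of_nonneg_left h7 hκ.le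
            _ = c * f y := by rw [hcdef]; ring
        have hb : c * f y ≤ (c+1) * (ε/(c+1)) := by
          apply mul_le_mul (by linarith) hyε.le (hf0 y) (by linarith)
        have hcc : (c+1) * (ε/(c+1)) = ε := by field_simp
        linarith
      linarith
    have hsum : ∀ x₀ : ℝ, 4 * (κ * Φ (f x₀)) ≤ ∫ x : ℝ, G x := by
      intro x₀
      have h1 := hIic x₀
      have h2 := hIoi x₀
      have h3 := integral_Iic_add_Ioi (b := x₀) hG.integrableOn hG.integrableOn
      linarith
    -- pass to the supremum
    have hsupA : 4 * (κ * Φ A) ≤ ∫ x : ℝ, G x := by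
      refine le_of_forall_pos_le_add ?_
      intro ε hε
      set c : ℝ := 4*κ*(A*M^2) with hcdef
      have hc0 : 0 ≤ c := by positivity
      have hlt : A - ε/(c+1) < ⨆ x, f x := by
        rw [← hAdef]
        have : 0 < ε/(c+1) := by positivity
        linarith
      obtain ⟨x₀, hx₀⟩ := exists_lt_of_lt_ciSup hlt
      have hfx₀A : f x₀ ≤ A := hfA x₀
      have h1 : Φ A - Φ (f x₀) = ∫ v in (f x₀)..A, φ v :=
        integral_interval_sub_left (hφc.intervalIntegrable _ _) (hφc.intervalIntegrable _ _)
      have h2 : |∫ v in (f x₀)..A, φ v| ≤ (A*M^2) * |A - f x₀| := by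
        have := intervalIntegral.norm_integral_le_of_norm_le_const
          (a := f x₀) (b := A) (C := A*M^2) (f := φ) (fun v _ => hφbn v)
        rw [Real.norm_eq_abs] at this
        exact this
      have h3 : Φ A ≤ Φ (f x₀) + (A*M^2) * (ε/(c+1)) := by
        have h4 : |A - f x₀| ≤ ε/(c+1) := by
          rw [abs_of_nonneg (by linarith)]
          linarith
        have h5 : (A*M^2) * |A - f x₀| ≤ (A*M^2) * (ε/(c+1)) :=
          mul_le_mul_of_nonneg_left h4 (by positivity)
        have h6 : Φ A - Φ (f x₀) ≤ (A*M^2) * |A - f x₀| := by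
          rw [h1]; exact (le_abs_self _).trans h2
        exact sub_le_iff_le_add'.mp (h6.trans h5)
      have h7 := hsum x₀
      have h8 : 4 * (κ * Φ A) ≤ 4 * (κ * Φ (f x₀)) + c * (ε/(c+1)) := by
        have := mul_le_mul_of_nonneg_left h3 (by positivity : (0:ℝ) ≤ 4*κ)
        rw [mul_add] at this
        calc 4 * (κ * Φ A) = 4*κ * Φ A := by ring
          _ ≤ 4*κ * Φ (f x₀) + 4*κ*((A*M^2) * (ε/(c+1))) := this
          _ = 4 * (κ * Φ (f x₀)) + c * (ε/(c+1)) := by rw [hcdef]; ring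
      have h9 : c * (ε/(c+1)) ≤ ε := by
        have hcc : (c+1) * (ε/(c+1)) = ε := by field_simp
        nlinarith [div_nonneg hε.le (by linarith : (0:ℝ) ≤ c+1)]
      linarith
    -- value of the full integral
    have hGval : (∫ x : ℝ, G x) = K + κ^2 * (M^4 * m - S) := by
      simp only [hGdef]
      rw [integral_add hK' (hφf2int.const_mul _), MeasureTheory.integral_const_mul]
      have e1 : (∫ x : ℝ, g x^2) = K := rfl
      have e2 : (∫ x : ℝ, (φ (f x))^2) = M^4 * m - S := by
        rw [integral_congr_ae (Filter.Eventually.of_forall fun x => hφf2eq x)]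
        rw [integral_sub (hu2.const_mul (M^4)) hS', MeasureTheory.integral_const_mul]
      rw [e1, e2]
    -- lower bound for Φ A
    have hΦA : π*A^4/8 ≤ Φ A := by
      rw [← key_integral A hApos]
      apply intervalIntegral.integral_mono_on hA0
        ((continuous_id.mul (continuous_const.sub (continuous_pow 4)).sqrt).intervalIntegrable _ _)
        (hφc.intervalIntegrable _ _)
      intro t ht
      have hclt : cl t = t := by
        rw [hcldef]; simp only
        rw [max_eq_left ht.1, min_eq_left ht.2]
      have hsq : Real.sqrt (A^4 - t^4) ≤ Real.sqrt (M^4 - t^4) := by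
        apply Real.sqrt_le_sqrt
        have := pow_le_pow_left₀ hA0 hAM.le 4
        linarith
      calc t * Real.sqrt (A^4 - t^4) ≤ t * Real.sqrt (M^4 - t^4) :=
            mul_le_mul_of_nonneg_left hsq ht.1
        _ = φ t := by rw [hφdef]; simp only; rw [hclt]
    -- conclude
    have hfinal : 4 * (κ * (π*A^4/8)) ≤ K + κ^2 * (M^4 * m - S) := by
      have := mul_le_mul_of_nonneg_left hΦA (by positivity : (0:ℝ) ≤ 4*κ)
      calc 4 * (κ * (π*A^4/8)) = 4*κ*(π*A^4/8) := by ring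
        _ ≤ 4*κ*(Φ A) := this
        _ = 4 * (κ * Φ A) := by ring
        _ ≤ ∫ x : ℝ, G x := hsupA
        _ = K + κ^2 * (M^4 * m - S) := hGval
    calc π/2 * κ * A^4 = 4 * (κ * (π*A^4/8)) := by ring
      _ ≤ K + κ^2 * (M^4 * m - S) := hfinal
  have hπ : (0:ℝ) < π := Real.pi_pos
  -- quadratic discriminant lemma
  have hquad : ∀ Q R P : ℝ, 0 < P → 0 ≤ Q → (∀ κ : ℝ, 0 < κ → P * κ ≤ Q + κ^2 * R) →
      P^2 ≤ 4*Q*R := by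
    intro Q R P hP hQ hall
    have hR : 0 < R := by
      by_contra hRc
      push_neg at hRc
      have h := hall ((Q+1)/P) (by positivity)
      have h2 : ((Q+1)/P)^2 * R ≤ 0 := mul_nonpos_of_nonneg_of_nonpos (sq_nonneg _) hRc
      have hPk : P * ((Q+1)/P) = Q+1 := by field_simp
      linarith
    have h := hall (P/(2*R)) (by positivity)
    have e1 : P * (P/(2*R)) = P^2/(2*R) := by field_simp
    have e2 : (P/(2*R))^2 * R = P^2/(4*R) := by field_simp; ring
    rw [e1, e2] at h
    have h4 : P^2/(4*R) ≤ Q := by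
      have e3 : P^2/(2*R) = P^2/(4*R) + P^2/(4*R) := by ring
      linarith [e3 ▸ h]
    calc P^2 = (P^2/(4*R))*(4*R) := by field_simp
      _ ≤ Q*(4*R) := mul_le_mul_of_nonneg_right h4 (by positivity)
      _ = 4*Q*R := by ring
  have hfinal : π^2 * S ≤ 4*K*m^2 := by
    rcases eq_or_lt_of_le hA0 with hAz | hApos
    · -- A = 0 : u vanishes identically
      have hSz : S = 0 := by
        rw [hSdef]
        have hz : (fun x : ℝ => ‖u x‖^6) = fun _ => (0:ℝ) := by
          funext x
          have h1 : f x = 0 := le_antisymm (hAz ▸ hfA x) (hf0 x)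
          have h2 : ‖u x‖ = 0 := h1
          rw [h2]
          norm_num
        rw [hz, MeasureTheory.integral_zero]
      rw [hSz, mul_zero]
      positivity
    · have hP : 0 < π/2 * A^4 := by positivity
      have hdisc : ∀ η : ℝ, 0 < η → (π/2*A^4)^2 ≤ 4*K*((A+η)^4*m - S) := by
        intro η hη
        refine hquad K _ _ hP hK0 fun κ hκ => ?_
        have := hmaster hApos η hη κ hκ
        calc (π/2*A^4) * κ = π/2*κ*A^4 := by ring
          _ ≤ _ := this
      have hKpos : 0 < K := by
        rcases eq_or_lt_of_le hK0 with hKz | h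
        · exfalso
          have h := hdisc 1 one_pos
          rw [← hKz] at h
          nlinarith [pow_pos hApos 4, hπ]
        · exact h
      have hlim : (π/2*A^4)^2 ≤ 4*K*(A^4*m - S) := by
        refine le_of_forall_pos_le_add ?_
        intro ε hε
        set W : ℝ := 4*K*m*(4*A^3+6*A^2+4*A+1) with hWdef
        have hW0 : 0 ≤ W := by positivity
        set η : ℝ := min 1 (ε/(W+1)) with hηdef
        have hη0 : 0 < η := lt_min one_pos (by positivity)
        have h := hdisc η hη0
        have hη1 : η ≤ 1 := min_le_left _ _
        have hη2 : η ≤ ε/(W+1) := min_le_right _ _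
        have hexp : (A+η)^4*m ≤ A^4*m + η*(4*A^3+6*A^2+4*A+1)*m := by
          have hηη : η^2 ≤ η := by nlinarith [hη0.le, hη1]
          have hηη3 : η^3 ≤ η := by nlinarith [hη0.le, hη1]
          have hηη4 : η^4 ≤ η := by nlinarith [hη0.le, hη1]
          have t1 : 0 ≤ m*A^2*(η - η^2) :=
            mul_nonneg (mul_nonneg hm0 (sq_nonneg A)) (by linarith)
          have t2 : 0 ≤ m*A*(η - η^3) := mul_nonneg (mul_nonneg hm0 hA0) (by linarith)
          have t3 : 0 ≤ m*(η - η^4) := mul_nonneg hm0 (by linarith)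
          nlinarith [t1, t2, t3]
        have h2 : 4*K*((A+η)^4*m - S) ≤ 4*K*(A^4*m - S) + η*W := by
          have := mul_le_mul_of_nonneg_left hexp (by positivity : (0:ℝ) ≤ 4*K)
          have e : 4*K*(A^4*m + η*(4*A^3+6*A^2+4*A+1)*m)
              = 4*K*(A^4*m) + η*W := by rw [hWdef]; ring
          nlinarith [this, e ▸ this]
        have h3 : η*W ≤ ε := by
          have ha : η*W ≤ (ε/(W+1))*W := mul_le_mul_of_nonneg_right hη2 hW0
          have hb : (ε/(W+1))*W ≤ ε := by
            rw [div_mul_eq_mul_div, div_le_iff₀ (by positivity)]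
            nlinarith [hε.le, hW0]
          linarith
        linarith
      have e : (π/2*A^4)^2 = π^2*A^8/4 := by ring
      rw [e] at hlim
      have h2 : 16*(π^2)*(K*S) ≤ 64*K^2*m^2 := by
        nlinarith [hlim, sq_nonneg (π^2*A^4 - 8*K*m), mul_pos hπ hπ, hKpos.le]
      nlinarith [h2, hKpos, mul_pos hπ hπ, hS0]
  rw [ge_iff_le]
  have hmain : (1:ℝ)/6 * S ≤ 1/2 * K * (4/(3*π^2) * m^2) := by
    have e : 1/2 * K * (4/(3*π^2) * m^2) = (2*K*m^2)/(3*π^2) := by ring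
    rw [e]
    rw [show (1:ℝ)/6 * S = S/6 by ring]
    rw [div_le_div_iff₀ (by norm_num) (by positivity)]
    nlinarith [hfinal]
  nlinarith [hmain, hK0]
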